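/- arXiv:1210.4235 — 2 statements merged into one kernel-verified Lean document; each statement's English description precedes it below -/
import Mathlib

section
/- Let L be a circulant n×n real matrix with L·1 = 0, zero a simple eigenvalue, and all other eigenvalues with positive real part. Then the node certainty index is the same for all nodes: for every k, lim_{t→∞}((∫₀^t exp(-Ls)exp(-L^T s) ds)_{kk} − t/n) = (1/n)·∑_{p=2}^n 1/(2 Re(λ_p)), independent of k. -/
open Matrix Finset Filter NormedSpace


open Fin.NatCast in
private lemma diag_eq_of_commute_shift {n : ℕ} [NeZero n]
    (X : Matrix (Fin n) (Fin n) ℝ)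
    (h : Matrix.circulant (fun i : Fin n => if i = 1 then (1:ℝ) else 0) * X
       = X * Matrix.circulant (fun i : Fin n => if i = 1 then (1:ℝ) else 0))
    (k : Fin n) : X k k = X 0 0 := by
  have key : ∀ i j : Fin n, X (i - 1) j = X i (j + 1) := by
    intro i j
    have h1 := congrFun (congrFun h i) j
    have hc1 : ∀ l : Fin n, (i - l = 1) = (l = i - 1) := by
      intro l
      rw [eq_iff_iff, sub_eq_iff_eq_add, eq_sub_iff_add_eq, add_comm l 1, eq_comm]
    have hc2 : ∀ l : Fin n, (l - j = 1) = (l = j + 1) := by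
      intro l
      rw [eq_iff_iff, sub_eq_iff_eq_add, add_comm (1 : Fin n) j]
    simp only [Matrix.mul_apply, Matrix.circulant_apply, hc1, hc2, ite_mul, mul_ite,
      one_mul, mul_one, zero_mul, mul_zero, Finset.sum_ite_eq, Finset.sum_ite_eq',
      Finset.mem_univ, if_true] at h1
    exact h1
  have step : ∀ m : Fin n, X m m = X (m + 1) (m + 1) := by
    intro m
    have := key (m + 1) m
    rwa [add_sub_cancel_right] at this
  have hnat : ∀ m : ℕ, X (m : Fin n) (m : Fin n) = X 0 0 := by
    intro m
    induction m with
    | zero => simp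
    | succ m ih => rw [Nat.cast_succ, ← step]; exact ih
  have := hnat k.val
  rwa [Fin.cast_val_eq_self] at this


private lemma exp_conj_unitary {n : ℕ} (U A : Matrix (Fin n) (Fin n) ℂ)
    (h : U * Uᴴ = 1) :
    exp (U * A * Uᴴ) = U * exp A * Uᴴ := by
  have hU : IsUnit U := ⟨⟨U, Uᴴ, h, mul_eq_one_comm.mp h⟩, rfl⟩
  have hinv : U⁻¹ = Uᴴ := Matrix.inv_eq_right_inv h
  rw [← hinv, Matrix.exp_conj U A hU]

private lemma map_exp_matrix {n : ℕ} (A : Matrix (Fin n) (Fin n) ℝ) :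
    (exp A).map Complex.ofReal = exp (A.map Complex.ofReal) := by
  letI : SeminormedRing (Matrix (Fin n) (Fin n) ℝ) := Matrix.linftyOpSemiNormedRing
  letI : NormedRing (Matrix (Fin n) (Fin n) ℝ) := Matrix.linftyOpNormedRing
  letI : NormedAlgebra ℝ (Matrix (Fin n) (Fin n) ℝ) := Matrix.linftyOpNormedAlgebra
  letI : SeminormedRing (Matrix (Fin n) (Fin n) ℂ) := Matrix.linftyOpSemiNormedRing
  letI : NormedRing (Matrix (Fin n) (Fin n) ℂ) := Matrix.linftyOpNormedRing
  letI : NormedAlgebra ℝ (Matrix (Fin n) (Fin n) ℂ) := Matrix.linftyOpNormedAlgebra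
  letI : NormedAlgebra ℚ (Matrix (Fin n) (Fin n) ℝ) := Matrix.linftyOpNormedAlgebra
  letI : NormedAlgebra ℚ (Matrix (Fin n) (Fin n) ℂ) := Matrix.linftyOpNormedAlgebra
  have hf : Continuous fun M : Matrix (Fin n) (Fin n) ℝ =>
      (Complex.ofRealHom.mapMatrix M : Matrix (Fin n) (Fin n) ℂ) := by
    simp only [RingHom.mapMatrix_apply]
    exact Continuous.matrix_map continuous_id Complex.continuous_ofReal
  exact map_exp (Complex.ofRealHom.mapMatrix (m := Fin n)) hf A

private lemma trace_exp_two {n : ℕ} [NeZero n]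
    (L : Matrix (Fin n) (Fin n) ℝ)
    (lam : Fin n → ℂ) (u : Fin n → Fin n → ℂ)
    (horth : ∀ p q, ∑ i, starRingEnd ℂ (u p i) * u q i = if p = q then 1 else 0)
    (heig : ∀ p, (L.map Complex.ofReal) *ᵥ u p = lam p • u p)
    (s : ℝ) :
    Matrix.trace ((exp (-(s • L))) * (exp (-(s • Lᵀ))))
      = ∑ p, Real.exp (-(2 * (lam p).re) * s) := by
  classical
  set Lc : Matrix (Fin n) (Fin n) ℂ := L.map Complex.ofReal with hLc
  set U : Matrix (Fin n) (Fin n) ℂ := Matrix.of (fun i p => u p i) with hU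
  have hUU : Uᴴ * U = 1 := by
    ext p q
    simp only [Matrix.mul_apply, Matrix.conjTranspose_apply, Matrix.one_apply, hU,
      Matrix.of_apply]
    simpa using horth p q
  have hUU' : U * Uᴴ = 1 := mul_eq_one_comm.mpr hUU
  have hLU : Lc * U = U * Matrix.diagonal lam := by
    ext i p
    have := congrFun (heig p) i
    simp only [Matrix.mulVec, dotProduct, Pi.smul_apply, smul_eq_mul] at this
    rw [Matrix.mul_diagonal]
    simp only [Matrix.mul_apply, hU, Matrix.of_apply]
    exact this.trans (mul_comm _ _)
  have hLcdiag : Lc = U * Matrix.diagonal lam * Uᴴ := by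
    calc Lc = Lc * (U * Uᴴ) := by rw [hUU', Matrix.mul_one]
    _ = (Lc * U) * Uᴴ := by rw [Matrix.mul_assoc]
    _ = U * Matrix.diagonal lam * Uᴴ := by rw [hLU]
  have hLcT : Lᵀ.map Complex.ofReal = Lcᴴ := by
    ext i j
    simp [hLc, Matrix.conjTranspose_apply, Complex.conj_ofReal]
  have hLcH : Lcᴴ = U * Matrix.diagonal (fun p => starRingEnd ℂ (lam p)) * Uᴴ := by
    rw [hLcdiag]
    simp only [Matrix.conjTranspose_mul, Matrix.conjTranspose_conjTranspose,
      Matrix.diagonal_conjTranspose]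
    rw [Matrix.mul_assoc]
    rfl
  -- conjugated smul forms
  have hconj1 : -(s • Lc) = U * (-(s • Matrix.diagonal lam)) * Uᴴ := by
    rw [hLcdiag]
    simp only [Matrix.smul_mul, Matrix.mul_smul, Matrix.neg_mul, Matrix.mul_neg]
  have hconj2 : -(s • Lcᴴ)
      = U * (-(s • Matrix.diagonal (fun p => starRingEnd ℂ (lam p)))) * Uᴴ := by
    rw [hLcH]
    simp only [Matrix.smul_mul, Matrix.mul_smul, Matrix.neg_mul, Matrix.mul_neg]
  -- trace over ℂ of the mapped product
  have hmap : ((exp (-(s • L))) * (exp (-(s • Lᵀ)))).map Complex.ofReal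
      = U * ((exp (-(s • Matrix.diagonal lam)))
          * (exp (-(s • Matrix.diagonal (fun p => starRingEnd ℂ (lam p)))))) * Uᴴ := by
    have hmul : ((exp (-(s • L))) * (exp (-(s • Lᵀ)))).map Complex.ofReal
        = (exp (-(s • L))).map Complex.ofReal * (exp (-(s • Lᵀ))).map Complex.ofReal :=
      Matrix.map_mul (f := Complex.ofRealHom)
    have hm1 : (-(s • L)).map Complex.ofReal = -(s • Lc) := by
      ext i j; simp [hLc]
    have hm2 : (-(s • Lᵀ)).map Complex.ofReal = -(s • Lcᴴ) := by
      have : (-(s • Lᵀ)).map Complex.ofReal = -(s • (Lᵀ.map Complex.ofReal)) := by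
        ext i j; simp
      rw [this, hLcT]
    rw [hmul, map_exp_matrix, map_exp_matrix, hm1, hm2, hconj1, hconj2,
      exp_conj_unitary _ _ hUU', exp_conj_unitary _ _ hUU']
    calc (U * exp (-(s • Matrix.diagonal lam)) * Uᴴ)
          * (U * exp (-(s • Matrix.diagonal (fun p => starRingEnd ℂ (lam p)))) * Uᴴ)
        = U * exp (-(s • Matrix.diagonal lam)) * (Uᴴ * U)
          * (exp (-(s • Matrix.diagonal (fun p => starRingEnd ℂ (lam p)))) * Uᴴ) := by
          simp only [Matrix.mul_assoc]
      _ = _ := by rw [hUU]; simp only [Matrix.mul_one, Matrix.mul_assoc]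
  -- compute the diagonal exponentials
  have hdiag1 : exp (-(s • Matrix.diagonal lam))
      = Matrix.diagonal (fun p => Complex.exp (-(s • lam p))) := by
    rw [show -(s • Matrix.diagonal lam) = Matrix.diagonal (fun p => -(s • lam p)) by
      ext i j
      by_cases h : i = j <;> simp [Matrix.diagonal_apply, h]]
    rw [Matrix.exp_diagonal]
    rw [Pi.exp_def]
    funext p
    rw [← Complex.exp_eq_exp_ℂ]
  have hdiag2 : exp (-(s • Matrix.diagonal (fun p => starRingEnd ℂ (lam p))))
      = Matrix.diagonal (fun p => Complex.exp (-(s • starRingEnd ℂ (lam p)))) := by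
    rw [show -(s • Matrix.diagonal (fun p => starRingEnd ℂ (lam p)))
        = Matrix.diagonal (fun p => -(s • starRingEnd ℂ (lam p))) by
      ext i j
      by_cases h : i = j <;> simp [Matrix.diagonal_apply, h]]
    rw [Matrix.exp_diagonal]
    rw [Pi.exp_def]
    funext p
    rw [← Complex.exp_eq_exp_ℂ]
  -- take traces
  have htr : Complex.ofReal (Matrix.trace ((exp (-(s • L))) * (exp (-(s • Lᵀ)))))
      = ∑ p, Complex.exp (-(s • lam p)) * Complex.exp (-(s • starRingEnd ℂ (lam p))) := by
    have h1 : Complex.ofReal (Matrix.trace ((exp (-(s • L))) * (exp (-(s • Lᵀ)))))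
        = Matrix.trace (((exp (-(s • L))) * (exp (-(s • Lᵀ)))).map Complex.ofReal) := by
      simp [Matrix.trace, Matrix.diag, Matrix.map_apply]
    rw [h1, hmap, hdiag1, hdiag2, Matrix.diagonal_mul_diagonal]
    rw [Matrix.trace_mul_cycle, hUU, Matrix.one_mul]
    simp [Matrix.trace_diagonal]
  have hterm : ∀ p, Complex.exp (-(s • lam p)) * Complex.exp (-(s • starRingEnd ℂ (lam p)))
      = Complex.ofReal (Real.exp (-(2 * (lam p).re) * s)) := by
    intro p
    rw [← Complex.exp_add, Complex.ofReal_exp]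
    congr 1
    have : lam p + starRingEnd ℂ (lam p) = ((2 * (lam p).re : ℝ) : ℂ) := Complex.add_conj _
    rw [← neg_add, ← smul_add, this, Complex.real_smul]
    push_cast
    ring
  have := htr
  simp only [hterm] at this
  rw [← Complex.ofReal_sum] at this
  exact_mod_cast this


private lemma integral_exp_neg_mul {c : ℝ} (hc : c ≠ 0) (t : ℝ) :
    ∫ s in (0:ℝ)..t, Real.exp (-c * s) = (1 - Real.exp (-c * t)) / c := by
  have hd : ∀ s ∈ Set.uIcc (0:ℝ) t,
      HasDerivAt (fun x => -(Real.exp (-c * x) / c)) (Real.exp (-c * s)) s := by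
    intro s _
    have h1 : HasDerivAt (fun x : ℝ => -c * x) (-c) s := by
      simpa using (hasDerivAt_id s).const_mul (-c)
    have h3 := (h1.exp.div_const c).neg
    rw [show -(Real.exp (-c * s) * -c / c) = Real.exp (-c * s) by field_simp] at h3
    exact h3
  rw [intervalIntegral.integral_eq_sub_of_hasDerivAt hd
    ((Real.continuous_exp.comp (by continuity)).intervalIntegrable _ _)]
  field_simp
  simp only [mul_zero, neg_zero, Real.exp_zero]
  ring

private lemma tendsto_aux {c : ℝ} (hc : 0 < c) :
    Tendsto (fun t : ℝ => (1 - Real.exp (-c * t)) / c) atTop (nhds (1 / c)) := by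
  have h1 : Tendsto (fun t : ℝ => Real.exp (-c * t)) atTop (nhds 0) := by
    apply Real.tendsto_exp_atBot.comp
    exact Tendsto.const_mul_atTop_of_neg (neg_lt_zero.mpr hc) tendsto_id
  have := (tendsto_const_nhds (x := (1:ℝ)).sub h1).div_const c
  simpa using this


/-- For a circulant Laplacian `L` (with `L·1 = 0`, zero a simple eigenvalue and
all other eigenvalues with positive real part), all nodes are equally certain:
for every `k`, the diagonal entry of the covariance integral minus `t/n`
converges to `(1/n)·∑_{p≠0} 1/(2 Re λ_p)`, independent of `k`. -/
theorem circulant_nodes_equally_certain {n : ℕ} [NeZero n]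
    (v : Fin n → ℝ) (L : Matrix (Fin n) (Fin n) ℝ)
    (hLcirc : L = Matrix.circulant v)
    (hL1 : L *ᵥ (fun _ => (1 : ℝ)) = 0)
    (lam : Fin n → ℂ) (u : Fin n → Fin n → ℂ)
    (horth : ∀ p q, ∑ i, starRingEnd ℂ (u p i) * u q i = if p = q then 1 else 0)
    (heig : ∀ p, (L.map Complex.ofReal) *ᵥ u p = lam p • u p)
    (hlam0 : lam 0 = 0)
    (hre : ∀ p, p ≠ 0 → 0 < (lam p).re)
    (k : Fin n) :
    Tendsto
      (fun t : ℝ =>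
        (∫ s in (0 : ℝ)..t,
            ((NormedSpace.exp (-(s • L))) * (NormedSpace.exp (-(s • Lᵀ)))) k k)
          - t / n)
      atTop
      (nhds ((1 / n) * ∑ p ∈ Finset.univ.erase 0, 1 / (2 * (lam p).re))) := by
  classical
  have hn : (n : ℝ) ≠ 0 := Nat.cast_ne_zero.mpr (NeZero.ne n)
  set c : Fin n → ℝ := fun p => 2 * (lam p).re with hcdef
  -- Step 1: the diagonal entry equals (1/n) * sum of scalar exponentials
  have hEkk : ∀ s : ℝ, ((exp (-(s • L))) * (exp (-(s • Lᵀ)))) k k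
      = (1 / n) * ∑ p, Real.exp (-(c p) * s) := by
    intro s
    set P : Matrix (Fin n) (Fin n) ℝ :=
      Matrix.circulant (fun i : Fin n => if i = 1 then (1:ℝ) else 0) with hPdef
    set E : Matrix (Fin n) (Fin n) ℝ := (exp (-(s • L))) * (exp (-(s • Lᵀ))) with hEdef
    have hPL : Commute P L := by
      rw [hLcirc, hPdef]; exact Matrix.Fin.circulant_mul_comm _ _
    have hPLT : Commute P Lᵀ := by
      rw [hLcirc, Matrix.Fin.transpose_circulant, hPdef]
      exact Matrix.Fin.circulant_mul_comm _ _
    have h1 : Commute P (exp (-(s • L))) := ((hPL.smul_right s).neg_right).exp_right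
    have h2 : Commute P (exp (-(s • Lᵀ))) := ((hPLT.smul_right s).neg_right).exp_right
    have hcom : P * E = E * P := h1.mul_right h2
    have hdiag : ∀ m : Fin n, E m m = E 0 0 := fun m =>
      diag_eq_of_commute_shift E hcom m
    have htrE : Matrix.trace E = (n : ℝ) * E k k := by
      have h3 : ∀ m : Fin n, E m m = E k k := fun m => (hdiag m).trans (hdiag k).symm
      rw [Matrix.trace]
      calc ∑ m, Matrix.diag E m = ∑ _m : Fin n, E k k := by
            apply Finset.sum_congr rfl
            intro m _
            exact h3 m
        _ = (n : ℝ) * E k k := by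
            rw [Finset.sum_const, Finset.card_univ, Fintype.card_fin, nsmul_eq_mul]
    have htr : Matrix.trace E = ∑ p, Real.exp (-(c p) * s) := by
      rw [hEdef]
      have := trace_exp_two L lam u horth heig s
      simpa [hcdef] using this
    have h4 : (n : ℝ) * E k k = ∑ p, Real.exp (-(c p) * s) := htrE.symm.trans htr
    rw [← h4, one_div]
    rw [inv_mul_cancel_left₀ hn]
  -- Step 2: rewrite the whole function
  have hfun : (fun t : ℝ =>
        (∫ s in (0 : ℝ)..t,
            ((NormedSpace.exp (-(s • L))) * (NormedSpace.exp (-(s • Lᵀ)))) k k)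
          - t / n)
      = fun t : ℝ => (1 / n) * ∑ p ∈ Finset.univ.erase 0,
          (1 - Real.exp (-(c p) * t)) / (c p) := by
    funext t
    have hint : ∀ p : Fin n, IntervalIntegrable (fun s => Real.exp (-(c p) * s))
        MeasureTheory.volume 0 t :=
      fun p => (Real.continuous_exp.comp (by continuity)).intervalIntegrable _ _
    rw [show (fun s : ℝ =>
          ((NormedSpace.exp (-(s • L))) * (NormedSpace.exp (-(s • Lᵀ)))) k k)
        = fun s : ℝ => (1 / n) * ∑ p, Real.exp (-(c p) * s) from funext hEkk]
    rw [intervalIntegral.integral_const_mul]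
    rw [intervalIntegral.integral_finset_sum (fun p _ => hint p)]
    rw [← Finset.add_sum_erase _ _ (Finset.mem_univ (0 : Fin n))]
    have h0 : ∫ s in (0:ℝ)..t, Real.exp (-(c 0) * s) = t := by
      have : c 0 = 0 := by simp [hcdef, hlam0]
      simp [this]
    rw [h0]
    rw [Finset.sum_congr rfl (fun p hp => integral_exp_neg_mul
      (ne_of_gt (by
        have := hre p (Finset.ne_of_mem_erase hp)
        simp only [hcdef]
        linarith)) t)]
    ring
  rw [hfun]
  apply Tendsto.const_mul
  apply tendsto_finset_sum
  intro p hp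
  have hcp : 0 < c p := by
    have := hre p (Finset.ne_of_mem_erase hp)
    simp only [hcdef]; linarith
  have := tendsto_aux hcp
  simpa [hcdef] using this
end

section
/- For the imploding star with uniform weight α and σ = 1, the variance of each leaf node, i.e., the (k,k) entry (k ≥ 2) of ∫₀^t exp(-Ls)exp(-L^T s) ds, equals t + (2e^{-αt} − e^{-2αt} − 1)/α, which is independent of the number of nodes n, while the center's variance equals t. -/
open Matrix

lemma exp_smul_idem {n : ℕ} (P : Matrix (Fin n) (Fin n) ℝ) (hP : P * P = P) (c : ℝ) :
    NormedSpace.exp (c • P) = 1 + (Real.exp c - 1) • P := by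
  have hpow : ∀ k : ℕ, P ^ (k + 1) = P := by
    intro k; induction k with
    | zero => simp
    | succ m ih => rw [pow_succ, ih, hP]
  have hsum : Summable fun k : ℕ => (c ^ k / (k.factorial : ℝ)) • P :=
    (Real.summable_pow_div_factorial c).smul_const P
  have hfun : (fun k : ℕ => ((k.factorial : ℝ)⁻¹) • (c • P) ^ k)
      = fun k => (c ^ k / (k.factorial : ℝ)) • P
        + (if k = 0 then (1 : Matrix (Fin n) (Fin n) ℝ) - P else 0) := by
    funext k
    cases k with
    | zero => simp
    | succ m =>
      rw [smul_pow, hpow, if_neg (Nat.succ_ne_zero m), smul_smul, add_zero]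
      congr 1
      field_simp
  rw [NormedSpace.exp_eq_tsum (𝕂 := ℝ)]
  beta_reduce
  rw [hfun, Summable.tsum_add hsum]
  · rw [Summable.tsum_smul_const (Real.summable_pow_div_factorial c), tsum_ite_eq]
    have : ∑' k : ℕ, c ^ k / (k.factorial : ℝ) = Real.exp c := by
      rw [Real.exp_eq_exp_ℝ, NormedSpace.exp_eq_tsum_div]
    rw [this, sub_smul, one_smul]
    abel
  · exact summable_of_ne_finset_zero (s := {0}) (by intro k hk; simp at hk; simp [hk])

lemma integ_exp (b t : ℝ) (hb : b ≠ 0) :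
    ∫ s in (0:ℝ)..t, Real.exp (b * s) = (Real.exp (b * t) - 1) / b := by
  rw [intervalIntegral.integral_comp_mul_left (fun x => Real.exp x) hb, integral_exp]
  simp [smul_eq_mul]
  ring

/-- For the imploding star with uniform weight `α > 0` and `σ = 1`, the variance
of each leaf node—the `(k,k)` entry (`k ≠ 0`) of `∫₀ᵗ exp(-Ls) exp(-Lᵀs) ds`—is
`t + (2e^{-αt} − e^{-2αt} − 1)/α`, independent of the number of nodes `n`,
while the center's variance is `t`. -/
theorem imploding_star_variances {n : ℕ} (hn : 2 ≤ n) (α : ℝ) (hα : 0 < α)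
    (L : Matrix (Fin n) (Fin n) ℝ)
    (hL : L = Matrix.of (fun i j : Fin n =>
      if (i : ℕ) = 0 then 0
      else if (j : ℕ) = 0 then -α
      else if i = j then α else 0))
    (t : ℝ) :
    (∀ k : Fin n, (k : ℕ) ≠ 0 →
      (∫ s in (0 : ℝ)..t,
          ((NormedSpace.exp (-(s • L))) * (NormedSpace.exp (-(s • Lᵀ)))) k k)
        = t + (2 * Real.exp (-(α * t)) - Real.exp (-(2 * α * t)) - 1) / α) ∧
    (∀ k : Fin n, (k : ℕ) = 0 →
      (∫ s in (0 : ℝ)..t,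
          ((NormedSpace.exp (-(s • L))) * (NormedSpace.exp (-(s • Lᵀ)))) k k)
        = t) := by
  have hα' : α ≠ 0 := ne_of_gt hα
  set z : Fin n := ⟨0, by omega⟩ with hz
  have hzval : (z : ℕ) = 0 := rfl
  -- sum helper
  have hsum2 : ∀ (k : Fin n), (k : ℕ) ≠ 0 → ∀ (f : Fin n → ℝ),
      (∀ j, j ≠ z → j ≠ k → f j = 0) → ∑ j, f j = f z + f k := by
    intro k hk f hf
    have hzk : z ≠ k := by
      intro h; exact hk (h ▸ hzval)
    rw [← Finset.sum_subset (Finset.subset_univ ({z, k} : Finset (Fin n)))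
      (fun x _ hx => by
        simp only [Finset.mem_insert, Finset.mem_singleton] at hx
        push_neg at hx
        exact hf x hx.1 hx.2)]
    exact Finset.sum_pair hzk
  -- key algebraic fact
  have hLL : L * L = α • L := by
    ext i j
    rw [Matrix.mul_apply, Matrix.smul_apply, smul_eq_mul]
    by_cases hi : (i : ℕ) = 0
    · simp [hL, hi]
    · rw [hsum2 i hi _ (fun m hmz hmi => by
        have hm0 : (m : ℕ) ≠ 0 := fun h => hmz (Fin.ext (h.trans hzval.symm))
        simp [hL, hi, hm0, Ne.symm hmi, Ne.symm hmz])]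
      have hiz : ¬ i = z := fun h => hi (h ▸ hzval)
      simp [hL, hi, hzval, hiz]
  have hLLT : Lᵀ * Lᵀ = α • Lᵀ := by
    rw [← Matrix.transpose_mul, hLL, Matrix.transpose_smul]
  -- closed forms of the exponentials
  have key : ∀ (M : Matrix (Fin n) (Fin n) ℝ), M * M = α • M → ∀ s : ℝ,
      NormedSpace.exp (-(s • M)) = 1 + ((Real.exp (-(α * s)) - 1) * α⁻¹) • M := by
    intro M hM s
    have hP : (α⁻¹ • M) * (α⁻¹ • M) = α⁻¹ • M := by
      rw [Matrix.smul_mul, Matrix.mul_smul, hM, smul_smul, smul_smul]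
      congr 1
      field_simp
    have h1 : -(s • M) = (-(α * s)) • (α⁻¹ • M) := by
      rw [smul_smul, ← neg_smul]
      congr 1
      field_simp
    rw [h1, exp_smul_idem _ hP, smul_smul]
  have hexpL := key L hLL
  have hexpLT := key Lᵀ hLLT
  set c : ℝ → ℝ := fun s => (Real.exp (-(α * s)) - 1) * α⁻¹ with hc
  have hcα : ∀ s, c s * α = Real.exp (-(α * s)) - 1 := by
    intro s; simp only [hc]; field_simp
  constructor
  · -- leaves
    intro k hk
    have hkz : ¬ k = z := fun h => hk (h ▸ hzval)
    have hentry : ∀ s : ℝ,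
        ((NormedSpace.exp (-(s • L))) * (NormedSpace.exp (-(s • Lᵀ)))) k k
        = 2 * Real.exp ((-(2 * α)) * s) - 2 * Real.exp ((-α) * s) + 1 := by
      intro s
      rw [hexpL s, hexpLT s, Matrix.mul_apply]
      rw [hsum2 k hk _ (fun m hmz hmk => by
        have hm0 : (m : ℕ) ≠ 0 := fun h => hmz (Fin.ext (h.trans hzval.symm))
        simp [hL, Matrix.add_apply, Matrix.smul_apply, Matrix.one_apply, hk, hm0,
          Ne.symm hmk, hmk, Ne.symm hmz])]
      have e2 : Real.exp ((-(2 * α)) * s) = Real.exp (-(α * s)) * Real.exp (-(α * s)) := by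
        rw [← Real.exp_add]; ring_nf
      have e1 : Real.exp ((-α) * s) = Real.exp (-(α * s)) := by ring_nf
      simp only [Matrix.add_apply, Matrix.smul_apply, Matrix.one_apply, Matrix.transpose_apply,
        hL, Matrix.of_apply, hk, hzval, if_neg hkz, if_neg (fun h => hkz h.symm : ¬ z = k),
        if_pos rfl, smul_eq_mul, if_neg hk, e2, e1,
        ite_true, ite_false, if_true, if_false]
      set u := Real.exp (-(α * s))
      field_simp
      ring
    rw [intervalIntegral.integral_congr (fun s _ => hentry s)]
    have i1 : IntervalIntegrable (fun s : ℝ => 2 * Real.exp ((-(2 * α)) * s)) MeasureTheory.volume 0 t := by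
      apply Continuous.intervalIntegrable; fun_prop
    have i2 : IntervalIntegrable (fun s : ℝ => 2 * Real.exp ((-α) * s)) MeasureTheory.volume 0 t := by
      apply Continuous.intervalIntegrable; fun_prop
    have i3 : IntervalIntegrable (fun _ : ℝ => (1:ℝ)) MeasureTheory.volume 0 t := by
      apply Continuous.intervalIntegrable; fun_prop
    rw [intervalIntegral.integral_add (i1.sub i2) i3, intervalIntegral.integral_sub i1 i2,
      intervalIntegral.integral_const_mul, intervalIntegral.integral_const_mul,
      integ_exp (-(2*α)) t (by simp [hα'] : (-(2*α) : ℝ) ≠ 0),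
      integ_exp (-α) t (neg_ne_zero.mpr hα')]
    simp only [intervalIntegral.integral_const, smul_eq_mul, mul_one, sub_zero]
    have h2 : -(2*α) * t = -(2*α*t) := by ring
    have h1 : -α * t = -(α*t) := by ring
    rw [h2, h1]
    field_simp
    ring
  · -- center
    intro k hk0
    have hentry : ∀ s : ℝ,
        ((NormedSpace.exp (-(s • L))) * (NormedSpace.exp (-(s • Lᵀ)))) k k = 1 := by
      intro s
      rw [hexpL s, hexpLT s, Matrix.mul_apply]
      simp [hL, Matrix.add_apply, Matrix.smul_apply, Matrix.one_apply, hk0,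
        Finset.sum_ite_eq, Matrix.transpose_apply]
    rw [intervalIntegral.integral_congr (fun s _ => hentry s)]
    simp
end
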